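/- The softmax function is 1-Lipschitz from the ℓ∞ norm to the ℓ1 norm: for any x, y ∈ ℝ^L, ‖softmax(x) − softmax(y)‖₁ ≤ 2·‖x − y‖∞. (In particular the attention-weight perturbation is bounded by a constant multiple of the maximum logit perturbation, independent of L.) -/

import Mathlib

lemma softmax_key (A B ε : ℝ) (hA : 0 ≤ A) (hB : 0 ≤ B) (hAB : 0 < A + B) (hε : 0 ≤ ε) :
    A / (A + B) - A / (A + B * Real.exp (2 * ε)) ≤ ε := by
  set s := Real.exp ε with hs
  have hs1 : 1 ≤ s := Real.one_le_exp hε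
  have hc : Real.exp (2 * ε) = s ^ 2 := by
    rw [hs, ← Real.exp_nat_mul]; ring_nf
  have hs3 : s - 1 ≤ ε * s := by
    have h := Real.add_one_le_exp (-ε)
    have hsp : 0 < s := Real.exp_pos ε
    have h2 : (-ε + 1) * s ≤ Real.exp (-ε) * s := by nlinarith
    rw [← Real.exp_add] at h2
    simp at h2
    nlinarith
  have hD2 : (0:ℝ) < A + B * s ^ 2 := by nlinarith [mul_nonneg hB (by nlinarith : (0:ℝ) ≤ s^2 - 1)]
  rw [hc, div_sub_div _ _ (ne_of_gt hAB) (ne_of_gt hD2), div_le_iff₀ (by positivity)]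
  nlinarith [mul_nonneg hε (sq_nonneg (A - B * s)),
    mul_nonneg (mul_nonneg (mul_nonneg hA hB) (by linarith : (0:ℝ) ≤ s + 1))
      (by nlinarith : (0:ℝ) ≤ ε * (s + 1) - (s - 1))]

noncomputable def softmax {L : ℕ} (x : Fin L → ℝ) (i : Fin L) : ℝ :=
  Real.exp (x i) / ∑ j, Real.exp (x j)

/-- Softmax is Lipschitz from ℓ∞ to ℓ1 with constant 2, independently of L. -/
theorem softmax_lipschitz {L : ℕ} (hL : 0 < L) (x y : Fin L → ℝ) :
    ∑ i, |softmax x i - softmax y i| ≤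
      2 * Finset.univ.sup' (Finset.univ_nonempty_iff.mpr ⟨⟨0, hL⟩⟩)
        (fun i => |x i - y i|) := by
  set ε := Finset.univ.sup' (Finset.univ_nonempty_iff.mpr ⟨⟨0, hL⟩⟩)
        (fun i => |x i - y i|) with hεdef
  have hεi : ∀ i, |x i - y i| ≤ ε := fun i => Finset.le_sup' (fun j => |x j - y j|) (Finset.mem_univ i)
  have hε0 : 0 ≤ ε := le_trans (abs_nonneg _) (hεi ⟨0, hL⟩)
  have hne : (Finset.univ : Finset (Fin L)).Nonempty := ⟨⟨0, hL⟩, Finset.mem_univ _⟩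
  have hTx : (0:ℝ) < ∑ j, Real.exp (x j) :=
    Finset.sum_pos (fun _ _ => Real.exp_pos _) hne
  have hTy : (0:ℝ) < ∑ j, Real.exp (y j) :=
    Finset.sum_pos (fun _ _ => Real.exp_pos _) hne
  have hsumx : ∑ i, softmax x i = 1 := by
    simp only [softmax, ← Finset.sum_div]
    exact div_self (ne_of_gt hTx)
  have hsumy : ∑ i, softmax y i = 1 := by
    simp only [softmax, ← Finset.sum_div]
    exact div_self (ne_of_gt hTy)
  set p : Fin L → Prop := fun i => softmax y i < softmax x i with hp
  have hdec : DecidablePred p := fun i => Real.decidableLT _ _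
  set S := Finset.univ.filter p with hS
  set Sc := Finset.univ.filter (fun i => ¬ p i) with hSc
  -- split the sum
  have hsplit : ∑ i, |softmax x i - softmax y i|
      = ∑ i ∈ S, (softmax x i - softmax y i) + ∑ i ∈ Sc, (softmax y i - softmax x i) := by
    rw [← Finset.sum_filter_add_sum_filter_not Finset.univ p
      (fun i => |softmax x i - softmax y i|)]
    congr 1
    · exact Finset.sum_congr rfl fun i hi =>
        abs_of_pos (sub_pos.mpr ((Finset.mem_filter.mp hi).2))
    · refine Finset.sum_congr rfl fun i hi => ?_
      have h := (Finset.mem_filter.mp hi).2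
      rw [abs_of_nonpos (sub_nonpos.mpr (not_lt.mp h)), neg_sub]
  have hpx : ∑ i ∈ S, softmax x i + ∑ i ∈ Sc, softmax x i = 1 := by
    rw [Finset.sum_filter_add_sum_filter_not]; exact hsumx
  have hpy : ∑ i ∈ S, softmax y i + ∑ i ∈ Sc, softmax y i = 1 := by
    rw [Finset.sum_filter_add_sum_filter_not]; exact hsumy
  have hsub1 : ∑ i ∈ S, (softmax x i - softmax y i)
      = ∑ i ∈ S, softmax x i - ∑ i ∈ S, softmax y i := Finset.sum_sub_distrib _ _
  have hsub2 : ∑ i ∈ Sc, (softmax y i - softmax x i)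
      = ∑ i ∈ Sc, softmax y i - ∑ i ∈ Sc, softmax x i := Finset.sum_sub_distrib _ _
  -- the exponential masses
  set A := ∑ i ∈ S, Real.exp (x i) with hA
  set B := ∑ i ∈ Sc, Real.exp (x i) with hB
  set A' := ∑ i ∈ S, Real.exp (y i) with hA'
  set B' := ∑ i ∈ Sc, Real.exp (y i) with hB'
  have hA0 : 0 ≤ A := Finset.sum_nonneg fun _ _ => (Real.exp_pos _).le
  have hB0 : 0 ≤ B := Finset.sum_nonneg fun _ _ => (Real.exp_pos _).le
  have hA'0 : 0 ≤ A' := Finset.sum_nonneg fun _ _ => (Real.exp_pos _).le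
  have hB'0 : 0 ≤ B' := Finset.sum_nonneg fun _ _ => (Real.exp_pos _).le
  have hABx : A + B = ∑ j, Real.exp (x j) := by
    rw [hA, hB, Finset.sum_filter_add_sum_filter_not]
  have hABy : A' + B' = ∑ j, Real.exp (y j) := by
    rw [hA', hB', Finset.sum_filter_add_sum_filter_not]
  have hABpos : 0 < A + B := hABx ▸ hTx
  have hABpos' : 0 < A' + B' := hABy ▸ hTy
  have hpS : ∑ i ∈ S, softmax x i = A / (A + B) := by
    simp only [softmax]
    rw [hABx, hA, Finset.sum_div]
  have hqS : ∑ i ∈ S, softmax y i = A' / (A' + B') := by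
    simp only [softmax]
    rw [hABy, hA', Finset.sum_div]
  -- bounds relating A', B' to A, B
  have hA'ge : Real.exp (-ε) * A ≤ A' := by
    rw [hA, hA', Finset.mul_sum]
    refine Finset.sum_le_sum fun i _ => ?_
    rw [← Real.exp_add]
    exact Real.exp_le_exp.mpr (by have := abs_le.mp (hεi i); linarith)
  have hB'le : B' ≤ Real.exp ε * B := by
    rw [hB, hB', Finset.mul_sum]
    refine Finset.sum_le_sum fun i _ => ?_
    rw [← Real.exp_add]
    exact Real.exp_le_exp.mpr (by have := abs_le.mp (hεi i); linarith)
  -- lower bound q(S)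
  have hcpos : (1:ℝ) ≤ Real.exp (2 * ε) := Real.one_le_exp (by linarith)
  have hDc : 0 < A + B * Real.exp (2 * ε) := by
    nlinarith [mul_nonneg hB0 (by linarith : (0:ℝ) ≤ Real.exp (2*ε) - 1)]
  have hqlb : A / (A + B * Real.exp (2 * ε)) ≤ A' / (A' + B') := by
    rw [div_le_div_iff₀ hDc hABpos']
    have hee : Real.exp (-ε) * Real.exp (2 * ε) = Real.exp ε := by
      rw [← Real.exp_add]; ring_nf
    have hem : 0 < Real.exp (-ε) := Real.exp_pos _
    have h1 : A * B' ≤ A * (Real.exp ε * B) := mul_le_mul_of_nonneg_left hB'le hA0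
    have h2 : (Real.exp (-ε) * A) * B * Real.exp (2 * ε) ≤ A' * B * Real.exp (2 * ε) :=
      mul_le_mul_of_nonneg_right (mul_le_mul_of_nonneg_right hA'ge hB0)
        (by positivity : (0:ℝ) ≤ Real.exp (2 * ε))
    have h3 : A * (Real.exp ε * B) = (Real.exp (-ε) * A) * B * Real.exp (2 * ε) := by
      rw [← hee]; ring
    nlinarith [h1, h2, h3]
  have hkey := softmax_key A B ε hA0 hB0 hABpos hε0
  calc ∑ i, |softmax x i - softmax y i|
      = 2 * (∑ i ∈ S, softmax x i - ∑ i ∈ S, softmax y i) := by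
        rw [hsplit, hsub1, hsub2]; linarith
    _ = 2 * (A / (A + B) - A' / (A' + B')) := by rw [hpS, hqS]
    _ ≤ 2 * (A / (A + B) - A / (A + B * Real.exp (2 * ε))) := by linarith
    _ ≤ 2 * ε := by linarith
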